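/- Let B ∈ ℂ^{n×n} be Hermitian positive definite, p ∈ ℂ^n nonzero, and c > 0 with c · pᴴ B⁻¹ p constrained by B - c·p pᴴ positive definite. Then the maximum over nonzero w of (c|wᴴp|²)/(wᴴ(B - c·ppᴴ)w) equals c·pᴴ B⁻¹ p / (1 - c·pᴴ B⁻¹ p), attained at w = (B - c·ppᴴ)⁻¹ p. -/

import Mathlib

open Matrix ComplexOrder

private lemma herm_conj {n : ℕ} {A : Matrix (Fin n) (Fin n) ℂ} (hA : A.IsHermitian)
    (u v : Fin n → ℂ) :
    star (star u ⬝ᵥ (A *ᵥ v)) = star v ⬝ᵥ (A *ᵥ u) := by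
  rw [star_dotProduct, star_star, star_mulVec, hA.eq, ← dotProduct_mulVec]

private noncomputable def matCore {n : ℕ} {A : Matrix (Fin n) (Fin n) ℂ} (hA : A.PosDef) :
    PreInnerProductSpace.Core ℂ (Fin n → ℂ) where
  inner x y := star x ⬝ᵥ (A *ᵥ y)
  conj_inner_symm x y := herm_conj hA.isHermitian y x
  re_inner_nonneg x := by
    by_cases h : x = 0
    · simp [h]
    · exact (hA.re_dotProduct_pos h).le
  add_left x y z := by simp [star_add, add_dotProduct]
  smul_left x y r := by
    rw [← smul_eq_mul, ← smul_dotProduct, starRingEnd_apply, ← star_smul]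

private lemma cs_aux {n : ℕ} {A : Matrix (Fin n) (Fin n) ℂ} (hA : A.PosDef) (u v : Fin n → ℂ) :
    ‖star u ⬝ᵥ (A *ᵥ v)‖ ^ 2 ≤ (star u ⬝ᵥ (A *ᵥ u)).re * (star v ⬝ᵥ (A *ᵥ v)).re := by
  have h : ‖star u ⬝ᵥ (A *ᵥ v)‖ * ‖star v ⬝ᵥ (A *ᵥ u)‖ ≤
      (star u ⬝ᵥ (A *ᵥ u)).re * (star v ⬝ᵥ (A *ᵥ v)).re :=
    @InnerProductSpace.Core.inner_mul_inner_self_le ℂ _ _ _ _ (matCore hA) u v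
  have hconj : star v ⬝ᵥ (A *ᵥ u) = star (star u ⬝ᵥ (A *ᵥ v)) :=
    (herm_conj hA.isHermitian u v).symm
  rw [hconj, norm_star, ← sq] at h
  exact h

private lemma vecMulVec_mulVec' {n : ℕ} (p q x : Fin n → ℂ) :
    vecMulVec p q *ᵥ x = (q ⬝ᵥ x) • p := by
  ext i
  simp only [mulVec, dotProduct, vecMulVec_apply, Pi.smul_apply, smul_eq_mul, Finset.sum_mul]
  exact Finset.sum_congr rfl fun j _ => by ring

/-- SINR maximization with a rank-one signal term subtracted: for Hermitian PD `B`,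
`p ≠ 0`, `c > 0` with `B - c·ppᴴ` positive definite, the maximum over nonzero `w` of
`c|wᴴp|² / (wᴴ(B - c·ppᴴ)w)` equals `c·pᴴB⁻¹p / (1 - c·pᴴB⁻¹p)`,
attained at `w = (B - c·ppᴴ)⁻¹ p`. -/
theorem sinr_max_rank_one (n : ℕ) (B : Matrix (Fin n) (Fin n) ℂ)
    (hB : B.PosDef) (p : Fin n → ℂ) (hp : p ≠ 0) (c : ℝ) (hc : 0 < c)
    (hBc : (B - (c : ℂ) • vecMulVec p (star p)).PosDef) :
    (∀ w : Fin n → ℂ, w ≠ 0 →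
        c * ‖star w ⬝ᵥ p‖ ^ 2 /
            (star w ⬝ᵥ ((B - (c : ℂ) • vecMulVec p (star p)) *ᵥ w)).re ≤
          c * (star p ⬝ᵥ (B⁻¹ *ᵥ p)).re / (1 - c * (star p ⬝ᵥ (B⁻¹ *ᵥ p)).re)) ∧
      (let w := (B - (c : ℂ) • vecMulVec p (star p))⁻¹ *ᵥ p;
        c * ‖star w ⬝ᵥ p‖ ^ 2 /
            (star w ⬝ᵥ ((B - (c : ℂ) • vecMulVec p (star p)) *ᵥ w)).re =
          c * (star p ⬝ᵥ (B⁻¹ *ᵥ p)).re / (1 - c * (star p ⬝ᵥ (B⁻¹ *ᵥ p)).re)) := by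
  set A : Matrix (Fin n) (Fin n) ℂ := B - (c : ℂ) • vecMulVec p (star p) with hAdef
  have hA : A.PosDef := hBc
  have hAmul : ∀ y : Fin n → ℂ, A *ᵥ y = B *ᵥ y - ((c : ℂ) * (star p ⬝ᵥ y)) • p := by
    intro y
    rw [hAdef, sub_mulVec, smul_mulVec, vecMulVec_mulVec', smul_smul]
  have hBu : IsUnit B.det := (Matrix.isUnit_iff_isUnit_det B).1 hB.isUnit
  have hAu : IsUnit A.det := (Matrix.isUnit_iff_isUnit_det A).1 hA.isUnit
  have hBmul : ∀ y, B *ᵥ (B⁻¹ *ᵥ y) = y := fun y => by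
    rw [mulVec_mulVec, mul_nonsing_inv _ hBu, one_mulVec]
  have hBmul' : ∀ y, B⁻¹ *ᵥ (B *ᵥ y) = y := fun y => by
    rw [mulVec_mulVec, nonsing_inv_mul _ hBu, one_mulVec]
  have hAmulinv : ∀ y, A *ᵥ (A⁻¹ *ᵥ y) = y := fun y => by
    rw [mulVec_mulVec, mul_nonsing_inv _ hAu, one_mulVec]
  set s : ℂ := star p ⬝ᵥ (B⁻¹ *ᵥ p) with hsdef
  have hs : 0 < s := hB.inv.dotProduct_mulVec_pos hp
  have hsre : 0 < s.re := (Complex.lt_def.mp hs).1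
  have hsim : s.im = 0 := ((Complex.lt_def.mp hs).2).symm
  -- Step 1 : 1 - c * s.re > 0
  have hy0 : B⁻¹ *ᵥ p ≠ 0 := by
    intro h
    apply hp
    have h2 := hBmul p
    rw [h, mulVec_zero] at h2
    exact h2.symm
  have hss : star s = s := by
    have h0 : s = ((s.re : ℝ) : ℂ) := Complex.ext (by simp) (by simp [hsim])
    rw [h0, Complex.star_def, Complex.conj_ofReal]
  have hstarpy : star (B⁻¹ *ᵥ p) ⬝ᵥ p = s := by
    rw [star_dotProduct]
    exact hss
  have key1 : star (B⁻¹ *ᵥ p) ⬝ᵥ (A *ᵥ (B⁻¹ *ᵥ p)) = s * (1 - (c : ℂ) * s) := by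
    rw [hAmul, dotProduct_sub, hBmul, dotProduct_smul, hstarpy, ← hsdef]
    simp only [smul_eq_mul]
    ring
  have h1t : 0 < 1 - c * s.re := by
    have hq := (Complex.lt_def.mp (hA.dotProduct_mulVec_pos hy0)).1
    rw [key1] at hq
    simp only [Complex.zero_re, Complex.mul_re, Complex.sub_re, Complex.sub_im, Complex.one_re,
      Complex.one_im, Complex.ofReal_re, Complex.ofReal_im, Complex.mul_im, hsim] at hq
    nlinarith
  -- the maximizer
  set x : Fin n → ℂ := A⁻¹ *ᵥ p with hxdef
  have hAx : A *ᵥ x = p := hAmulinv p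
  have hx0 : x ≠ 0 := by
    intro h
    apply hp
    rw [← hAx, h, mulVec_zero]
  set ρ : ℂ := star p ⬝ᵥ x with hρdef
  have hxp : star x ⬝ᵥ p = star ρ := by
    rw [star_dotProduct]
  have hρpos : 0 < star ρ := by
    have h := hA.dotProduct_mulVec_pos hx0
    rwa [hAx, hxp] at h
  have hρre : 0 < ρ.re := by
    have h := (Complex.lt_def.mp hρpos).1
    simpa using h
  have hρim : ρ.im = 0 := by
    have h := ((Complex.lt_def.mp hρpos).2).symm
    simpa [neg_eq_zero] using h
  have hBx : B *ᵥ x = (1 + (c : ℂ) * ρ) • p := by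
    have h := hAmul x
    rw [hAx, ← hρdef] at h
    have h2 : B *ᵥ x = p + ((c : ℂ) * ρ) • p := sub_eq_iff_eq_add.mp h.symm
    rw [h2, add_smul, one_smul]
  have hρs : ρ = (1 + (c : ℂ) * ρ) * s := by
    have hxeq : x = B⁻¹ *ᵥ ((1 + (c : ℂ) * ρ) • p) := by
      rw [← hBx, hBmul']
    calc ρ = star p ⬝ᵥ x := hρdef
    _ = star p ⬝ᵥ (B⁻¹ *ᵥ ((1 + (c : ℂ) * ρ) • p)) := by rw [← hxeq]
    _ = (1 + (c : ℂ) * ρ) * s := by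
        rw [mulVec_smul, dotProduct_smul, smul_eq_mul, ← hsdef]
  -- scalar identity
  have hkeyR : ρ.re * (1 - c * s.re) = s.re := by
    have h : ρ * (1 - (c : ℂ) * s) = s := by
      linear_combination hρs
    have h2 := congrArg Complex.re h
    simp only [Complex.mul_re, Complex.sub_re, Complex.sub_im, Complex.one_re, Complex.one_im,
      Complex.ofReal_re, Complex.ofReal_im, Complex.mul_im, hsim, hρim] at h2
    nlinarith [h2]
  have hRHS : c * s.re / (1 - c * s.re) = c * ρ.re := by
    rw [div_eq_iff h1t.ne']
    linear_combination (-c) * hkeyR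
  have hstar_re : (star ρ).re = ρ.re := Complex.conj_re ρ
  have hxAx : (star x ⬝ᵥ (A *ᵥ x)).re = ρ.re := by
    rw [hAx, hxp, hstar_re]
  constructor
  · intro w hw
    have hD : 0 < (star w ⬝ᵥ (A *ᵥ w)).re := (Complex.lt_def.mp (hA.dotProduct_mulVec_pos hw)).1
    rw [hRHS, div_le_iff₀ hD]
    have hcs := cs_aux hA w x
    rw [hAx, hxp, hstar_re] at hcs
    nlinarith [norm_nonneg (star w ⬝ᵥ p), hcs]
  · show c * ‖star x ⬝ᵥ p‖ ^ 2 / (star x ⬝ᵥ (A *ᵥ x)).re =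
      c * s.re / (1 - c * s.re)
    rw [hRHS, hxAx, hxp]
    have hn : ‖star ρ‖ = ρ.re := by
      have : star ρ = ((ρ.re : ℝ) : ℂ) := by
        apply Complex.ext <;> simp [hρim]
      rw [this, Complex.norm_real, Real.norm_eq_abs, abs_of_pos hρre]
    have hne : ρ.re ≠ 0 := hρre.ne'
    rw [hn]
    field_simp
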